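/- The group M₃ presented by generators x₁,…,x₅ with relations x₁ = x₄, [x₁,x₂,x₃] = e, [x₃,x₄,x₅] = e, [x₁,x₂,x₅] = e, and x₂x₁x₂⁻¹ = x₄ is abelian, and is isomorphic to the free abelian group ℤ⁴. -/

import Mathlib

open FreeGroup

/-- The two relators expressing the cyclic relation `[a,b,c] = e`,
i.e. `c*b*a = b*a*c` and `b*a*c = a*c*b`. -/
def cyc {α : Type*} (a b c : FreeGroup α) : Set (FreeGroup α) :=
  {c * b * a * (b * a * c)⁻¹, b * a * c * (a * c * b)⁻¹}

/-- Relators of `M₃`: generators `x₁,…,x₅` are indexed by `0,…,4`.  The relations are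
`x₁ = x₄`, `[x₁,x₂,x₃] = e`, `[x₃,x₄,x₅] = e`, `[x₁,x₂,x₅] = e`, `x₂x₁x₂⁻¹ = x₄`. -/
def M3rels : Set (FreeGroup (Fin 5)) :=
  {of 0 * (of 3)⁻¹, of 1 * of 0 * (of 1)⁻¹ * (of 3)⁻¹} ∪
    cyc (of 0) (of 1) (of 2) ∪ cyc (of 2) (of 3) (of 4) ∪ cyc (of 0) (of 1) (of 4)

/-- The group `M₃`. -/
def M3 : Type := PresentedGroup M3rels

instance : Group M3 := by unfold M3; infer_instance

namespace M3aux

abbrev P : Type := PresentedGroup M3rels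

def g (i : Fin 5) : P := PresentedGroup.of i

lemma rel_one {r : FreeGroup (Fin 5)} (h : r ∈ M3rels) : PresentedGroup.mk M3rels r = 1 := by
  have hm : r ∈ Subgroup.normalClosure M3rels := Subgroup.subset_normalClosure h
  exact (QuotientGroup.eq_one_iff r).mpr hm

lemma mk_of (i : Fin 5) : PresentedGroup.mk M3rels (of i) = g i := rfl

lemma rel_eq {a b : FreeGroup (Fin 5)} (h : a * b⁻¹ ∈ M3rels) :
    PresentedGroup.mk M3rels a = PresentedGroup.mk M3rels b := by
  have := rel_one h
  simp only [_root_.map_mul, _root_.map_inv, mul_inv_eq_one] at this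
  exact this

lemma h03 : g 0 = g 3 :=
  rel_eq (by simp [M3rels])

lemma h10 : g 1 * g 0 * (g 1)⁻¹ = g 3 := by
  have h : (of 1 * of 0 * (of 1)⁻¹ * (of 3)⁻¹ : FreeGroup (Fin 5)) ∈ M3rels := by
    simp [M3rels]
  have := rel_eq h
  simpa [map_mul, map_inv, mk_of] using this

lemma c01 : Commute (g 0) (g 1) := by
  have h := h10
  rw [← h03, mul_inv_eq_iff_eq_mul] at h
  exact h.symm

lemma r1 : g 2 * g 1 * g 0 = g 1 * g 0 * g 2 := by
  have h : (of 2 * of 1 * of 0 * (of 1 * of 0 * of 2)⁻¹ : FreeGroup (Fin 5)) ∈ M3rels := by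
    simp [M3rels, cyc]
  simpa [map_mul, map_inv, mk_of] using rel_eq h

lemma r2 : g 1 * g 0 * g 2 = g 0 * g 2 * g 1 := by
  have h : (of 1 * of 0 * of 2 * (of 0 * of 2 * of 1)⁻¹ : FreeGroup (Fin 5)) ∈ M3rels := by
    simp [M3rels, cyc]
  simpa [map_mul, map_inv, mk_of] using rel_eq h

lemma r3 : g 4 * g 3 * g 2 = g 3 * g 2 * g 4 := by
  have h : (of 4 * of 3 * of 2 * (of 3 * of 2 * of 4)⁻¹ : FreeGroup (Fin 5)) ∈ M3rels := by
    simp [M3rels, cyc]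
  simpa [map_mul, map_inv, mk_of] using rel_eq h

lemma r5 : g 4 * g 1 * g 0 = g 1 * g 0 * g 4 := by
  have h : (of 4 * of 1 * of 0 * (of 1 * of 0 * of 4)⁻¹ : FreeGroup (Fin 5)) ∈ M3rels := by
    simp [M3rels, cyc]
  simpa [map_mul, map_inv, mk_of] using rel_eq h

lemma r6 : g 1 * g 0 * g 4 = g 0 * g 4 * g 1 := by
  have h : (of 1 * of 0 * of 4 * (of 0 * of 4 * of 1)⁻¹ : FreeGroup (Fin 5)) ∈ M3rels := by
    simp [M3rels, cyc]
  simpa [map_mul, map_inv, mk_of] using rel_eq h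

lemma c12 : Commute (g 1) (g 2) := by
  have h := r2
  rw [show g 1 * g 0 = g 0 * g 1 from c01.eq.symm, mul_assoc, mul_assoc] at h
  first | exact mul_left_cancel h | exact (mul_left_cancel h).symm

lemma c02 : Commute (g 0) (g 2) := by
  have h := r1
  rw [show g 2 * g 1 = g 1 * g 2 from c12.eq.symm, mul_assoc, mul_assoc] at h
  first | exact mul_left_cancel h | exact (mul_left_cancel h).symm

lemma c14 : Commute (g 1) (g 4) := by
  have h := r6
  rw [show g 1 * g 0 = g 0 * g 1 from c01.eq.symm, mul_assoc, mul_assoc] at h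
  first | exact mul_left_cancel h | exact (mul_left_cancel h).symm

lemma c04 : Commute (g 0) (g 4) := by
  have h := r5
  rw [show g 4 * g 1 = g 1 * g 4 from c14.eq.symm, mul_assoc, mul_assoc] at h
  first | exact mul_left_cancel h | exact (mul_left_cancel h).symm

lemma c24 : Commute (g 2) (g 4) := by
  have h := r3
  rw [← h03, show g 4 * g 0 = g 0 * g 4 from c04.eq.symm, mul_assoc, mul_assoc] at h
  first | exact mul_left_cancel h | exact (mul_left_cancel h).symm

lemma c03 : Commute (g 0) (g 3) := by rw [← h03]
lemma c13 : Commute (g 1) (g 3) := by rw [← h03]; exact c01.symm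
lemma c23 : Commute (g 2) (g 3) := by rw [← h03]; exact c02.symm
lemma c34 : Commute (g 3) (g 4) := by rw [← h03]; exact c04

lemma gcomm (i j : Fin 5) : Commute (g i) (g j) := by
  fin_cases i <;> fin_cases j <;>
    first
      | exact Commute.refl _
      | exact c01 | exact c01.symm | exact c02 | exact c02.symm
      | exact c03 | exact c03.symm | exact c04 | exact c04.symm
      | exact c12 | exact c12.symm | exact c13 | exact c13.symm
      | exact c14 | exact c14.symm | exact c23 | exact c23.symm
      | exact c24 | exact c24.symm | exact c34 | exact c34.symm

lemma key (b : P) (i : Fin 5) : Commute (g i) b := by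
  induction b using PresentedGroup.induction_on with
  | H z =>
    induction z using FreeGroup.induction_on with
    | C1 => simpa using Commute.one_right (g i)
    | of j => exact gcomm i j
    | inv_of j _ => simpa [mk_of] using (gcomm i j).inv_right
    | mul x y hx hy => simpa [_root_.map_mul] using hx.mul_right hy

lemma comm (a b : P) : a * b = b * a := by
  induction a using PresentedGroup.induction_on with
  | H z =>
    induction z using FreeGroup.induction_on with
    | C1 => simpa using (Commute.one_left b).eq
    | of j => exact key b j
    | inv_of j _ => simpa [mk_of] using ((key b j).inv_left).eq
    | mul x y hx hy =>
      have cx : Commute ((PresentedGroup.mk M3rels) x) b := hx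
      have cy : Commute ((PresentedGroup.mk M3rels) y) b := hy
      simpa [_root_.map_mul] using (cx.mul_left cy).eq

end M3aux

namespace M3aux

abbrev commP : CommGroup P := { (inferInstance : Group P) with mul_comm := comm }

attribute [local instance] commP

def e (k : Fin 4) : Multiplicative (Fin 4 → ℤ) := Multiplicative.ofAdd (Pi.single k 1)

def f5 : Fin 5 → Multiplicative (Fin 4 → ℤ)
  | 0 => e 0
  | 1 => e 1
  | 2 => e 2
  | 3 => e 0
  | 4 => e 3

@[simp] lemma f50 : f5 0 = e 0 := rfl
@[simp] lemma f51 : f5 1 = e 1 := rfl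
@[simp] lemma f52 : f5 2 = e 2 := rfl
@[simp] lemma f53 : f5 3 = e 0 := rfl
@[simp] lemma f54 : f5 4 = e 3 := rfl

lemma hrel : ∀ r ∈ M3rels, FreeGroup.lift f5 r = 1 := by
  intro r hr
  simp only [M3rels, cyc, Set.mem_union, Set.mem_insert_iff, Set.mem_singleton_iff] at hr
  rcases hr with ((((h | h) | (h | h)) | (h | h)) | (h | h)) <;>
    · subst h
      apply Multiplicative.toAdd.injective
      simp only [_root_.map_mul, _root_.map_inv, FreeGroup.lift_apply_of, f50, f51, f52, f53, f54,
        toAdd_mul, toAdd_inv, toAdd_one, e, toAdd_ofAdd]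
      abel

def φ : P →* Multiplicative (Fin 4 → ℤ) := PresentedGroup.toGroup hrel

@[simp] lemma φ_g (i : Fin 5) : φ (g i) = f5 i := PresentedGroup.toGroup.of hrel

def ev (i : Fin 4) : Multiplicative (Fin 4 → ℤ) →* Multiplicative ℤ :=
  AddMonoidHom.toMultiplicative (Pi.evalAddMonoidHom (fun _ => ℤ) i)

@[simp] lemma ev_apply (i : Fin 4) (v : Multiplicative (Fin 4 → ℤ)) :
    ev i v = Multiplicative.ofAdd (v.toAdd i) := rfl

def ψ : Multiplicative (Fin 4 → ℤ) →* P :=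
  ((zpowersHom P (g 0)).comp (ev 0)) * ((zpowersHom P (g 1)).comp (ev 1)) *
    ((zpowersHom P (g 2)).comp (ev 2)) * ((zpowersHom P (g 4)).comp (ev 3))

lemma ψ_apply (v : Multiplicative (Fin 4 → ℤ)) :
    ψ v = g 0 ^ (v.toAdd 0) * g 1 ^ (v.toAdd 1) * g 2 ^ (v.toAdd 2) * g 4 ^ (v.toAdd 3) := rfl

lemma ψ_e0 : ψ (e 0) = g 0 := by
  rw [ψ_apply]; simp [e, Pi.single_apply]
lemma ψ_e1 : ψ (e 1) = g 1 := by
  rw [ψ_apply]; simp [e, Pi.single_apply]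
lemma ψ_e2 : ψ (e 2) = g 2 := by
  rw [ψ_apply]; simp [e, Pi.single_apply]
lemma ψ_e3 : ψ (e 3) = g 4 := by
  rw [ψ_apply]; simp [e, Pi.single_apply]

lemma left_inv : ∀ a : P, ψ (φ a) = a := by
  have hcomp : ψ.comp φ = MonoidHom.id P := by
    apply PresentedGroup.ext
    intro x
    show ψ (φ (g x)) = g x
    rw [φ_g]
    fin_cases x
    · exact ψ_e0
    · exact ψ_e1
    · exact ψ_e2
    · exact ψ_e0.trans h03
    · exact ψ_e3
  intro a
  exact DFunLike.congr_fun hcomp a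

lemma right_inv : ∀ v : Multiplicative (Fin 4 → ℤ), φ (ψ v) = v := by
  intro v
  apply Multiplicative.toAdd.injective
  rw [ψ_apply]
  simp only [_root_.map_mul, map_zpow, φ_g, f50, f51, f52, f54, toAdd_mul, toAdd_zpow, e,
    toAdd_ofAdd]
  funext k
  fin_cases k <;> simp [Pi.single_apply]

def theEquiv : P ≃* Multiplicative (Fin 4 → ℤ) :=
  { toFun := φ, invFun := ψ, left_inv := left_inv, right_inv := right_inv,
    map_mul' := φ.map_mul }

end M3aux

/-- `M₃` is abelian, and is isomorphic to the free abelian group `ℤ⁴`. -/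
theorem M3_abelian_and_iso :
    (∀ a b : M3, a * b = b * a) ∧ Nonempty (M3 ≃* Multiplicative (Fin 4 → ℤ)) := by
  exact ⟨M3aux.comm, ⟨M3aux.theEquiv⟩⟩
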